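/- Let X̃* be the Markov chain on ℕ_{>0} with transition probabilities p*_1 = 1/3, r*_1 = 2/3, q*_1 = 0 and, for x ≥ 2, p*_x = x/(3(x+2)), r*_x = x(x+3)/(3(x+1)(x+2)), q*_x = (x+3)/(3(x+1)). Then the probability measure Π on ℕ_{>0} defined by Π(1) = 1/2, Π(2) = 3/10, and Π(x+1)/Π(x) = x/(x+4) for x ≥ 2, is a reversible (hence invariant) probability measure for X̃*: Π(x)p*_x = Π(x+1)q*_{x+1} for all x ≥ 1, and ∑_x Π(x) = 1. -/

import Mathlib

noncomputable def pstar (x : ℕ) : ℝ :=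
  if x = 1 then 1 / 3 else (x : ℝ) / (3 * ((x : ℝ) + 2))

noncomputable def rstar (x : ℕ) : ℝ :=
  if x = 1 then 2 / 3 else (x : ℝ) * ((x : ℝ) + 3) / (3 * ((x : ℝ) + 1) * ((x : ℝ) + 2))

noncomputable def qstar (x : ℕ) : ℝ :=
  if x = 1 then 0 else ((x : ℝ) + 3) / (3 * ((x : ℝ) + 1))

lemma closed_form (Pi : ℕ → ℝ) (h2 : Pi 2 = 3 / 10)
    (hrec : ∀ x : ℕ, 2 ≤ x → Pi (x + 1) = Pi x * x / ((x : ℝ) + 4)) :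
    ∀ x : ℕ, 2 ≤ x →
      Pi x = 36 / ((x : ℝ) * ((x : ℝ) + 1) * ((x : ℝ) + 2) * ((x : ℝ) + 3)) := by
  intro x hx
  induction x, hx using Nat.le_induction with
  | base => rw [h2]; norm_num
  | succ n hn ih =>
    have hn' : (2 : ℝ) ≤ (n : ℝ) := by exact_mod_cast hn
    rw [hrec n hn, ih]
    push_cast
    have h0 : (n : ℝ) ≠ 0 := by linarith
    have h1 : (n : ℝ) + 1 ≠ 0 := by linarith
    have h2' : (n : ℝ) + 2 ≠ 0 := by linarith
    have h3 : (n : ℝ) + 3 ≠ 0 := by linarith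
    have h4 : (n : ℝ) + 4 ≠ 0 := by linarith
    field_simp
    ring

lemma partial_sum (Pi : ℕ → ℝ) (h1 : Pi 1 = 1 / 2) (h2 : Pi 2 = 3 / 10)
    (hrec : ∀ x : ℕ, 2 ≤ x → Pi (x + 1) = Pi x * x / ((x : ℝ) + 4)) :
    ∀ N : ℕ, 1 ≤ N →
      ∑ n ∈ Finset.range N, Pi (n + 1)
        = 1 - 12 / (((N : ℝ) + 1) * ((N : ℝ) + 2) * ((N : ℝ) + 3)) := by
  intro N hN
  induction N, hN using Nat.le_induction with
  | base => simp [h1]; norm_num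
  | succ n hn ih =>
    rw [Finset.sum_range_succ, ih]
    have hcf := closed_form Pi h2 hrec (n + 1) (by omega)
    push_cast at hcf ⊢
    rw [hcf]
    have hn' : (1 : ℝ) ≤ (n : ℝ) := by exact_mod_cast hn
    have h1' : (n : ℝ) + 1 ≠ 0 := by linarith
    have h2' : (n : ℝ) + 2 ≠ 0 := by linarith
    have h3 : (n : ℝ) + 3 ≠ 0 := by linarith
    have h4 : (n : ℝ) + 4 ≠ 0 := by linarith
    field_simp
    ring

/-- The measure `Π` with `Π(1)=1/2`, `Π(2)=3/10`, `Π(x+1)/Π(x)=x/(x+4)` for `x ≥ 2`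
is a reversible probability measure for the conditioned chain `X̃*`: the transition
probabilities sum to one, detailed balance holds, and `Π` has total mass `1`. -/
theorem stmt_9 (Pi : ℕ → ℝ) (h1 : Pi 1 = 1 / 2) (h2 : Pi 2 = 3 / 10)
    (hrec : ∀ x : ℕ, 2 ≤ x → Pi (x + 1) = Pi x * x / ((x : ℝ) + 4)) :
    (∀ x : ℕ, 1 ≤ x → pstar x + rstar x + qstar x = 1) ∧
    (∀ x : ℕ, 1 ≤ x → Pi x * pstar x = Pi (x + 1) * qstar (x + 1)) ∧
    HasSum (fun x : {n : ℕ // 1 ≤ n} => Pi x) 1 := by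
  refine ⟨?_, ?_, ?_⟩
  · intro x hx
    rcases eq_or_lt_of_le hx with h | h
    · simp [pstar, rstar, qstar, ← h]; norm_num
    · have hx2 : 2 ≤ x := h
      have hx1 : x ≠ 1 := by omega
      have hx' : (2 : ℝ) ≤ (x : ℝ) := by exact_mod_cast hx2
      simp only [pstar, rstar, qstar, if_neg hx1]
      have h1' : (x : ℝ) + 1 ≠ 0 := by linarith
      have h2' : (x : ℝ) + 2 ≠ 0 := by linarith
      field_simp
      ring
  · intro x hx
    rcases eq_or_lt_of_le hx with h | h
    · subst h
      simp only [pstar, qstar]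
      norm_num [h1, h2]
    · have hx2 : 2 ≤ x := h
      have hx1 : x ≠ 1 := by omega
      have hx1' : x + 1 ≠ 1 := by omega
      have hx' : (2 : ℝ) ≤ (x : ℝ) := by exact_mod_cast hx2
      simp only [pstar, qstar, if_neg hx1, if_neg hx1']
      rw [hrec x hx2]
      push_cast
      have h2' : (x : ℝ) + 2 ≠ 0 := by linarith
      have h4 : (x : ℝ) + 4 ≠ 0 := by linarith
      field_simp
      ring
  · have key : HasSum (fun n : ℕ => Pi (n + 1)) 1 := by
      have hnn : ∀ n : ℕ, 0 ≤ Pi (n + 1) := by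
        intro n
        match n with
        | 0 => rw [h1]; norm_num
        | (m + 1) =>
          rw [closed_form Pi h2 hrec (m + 2) (by omega)]
          push_cast
          have : (0 : ℝ) ≤ (m : ℝ) := Nat.cast_nonneg m
          positivity
      rw [hasSum_iff_tendsto_nat_of_nonneg hnn]
      have heq : ∀ᶠ N : ℕ in Filter.atTop,
          ∑ n ∈ Finset.range N, Pi (n + 1)
            = 1 - 12 / (((N : ℝ) + 1) * ((N : ℝ) + 2) * ((N : ℝ) + 3)) := by
        filter_upwards [Filter.eventually_ge_atTop 1] with N hN
        exact partial_sum Pi h1 h2 hrec N hN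
      rw [Filter.tendsto_congr' heq]
      have hz : Filter.Tendsto
          (fun N : ℕ => 12 / (((N : ℝ) + 1) * ((N : ℝ) + 2) * ((N : ℝ) + 3)))
          Filter.atTop (nhds 0) := by
        apply squeeze_zero (fun n => by positivity)
          (g := fun N : ℕ => 12 / ((N : ℝ) + 1))
        · intro n
          apply div_le_div_of_nonneg_left (by norm_num) (by positivity)
          have hn0 : (0 : ℝ) ≤ (n : ℝ) := Nat.cast_nonneg n
          nlinarith [mul_nonneg hn0 hn0, mul_nonneg (mul_nonneg hn0 hn0) hn0]
        · have := (tendsto_const_div_atTop_nhds_zero_nat (12 : ℝ)).comp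
            (Filter.tendsto_add_atTop_nat 1)
          simpa [Function.comp_def] using this
      have := Filter.Tendsto.const_sub 1 hz
      simpa using this
    exact (Equiv.hasSum_iff
      { toFun := fun n => (⟨n + 1, Nat.le_add_left 1 n⟩ : {n : ℕ // 1 ≤ n})
        invFun := fun x => x.1 - 1
        left_inv := fun n => by simp
        right_inv := fun x => by
          ext
          have := x.2
          simp
          omega }).mp key
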